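/- arXiv:1803.02414 — 3 statements merged into one kernel-verified Lean document; each statement's English description precedes it below -/
import Mathlib

section
/- Let H be a real Hilbert space with inner product (·,·) and norm ‖·‖, and let ⟨·,·⟩ be another inner product on H satisfying c₁‖v‖² ≤ ⟨v,v⟩ ≤ c₂‖v‖² for all v ∈ H and some constants 0 < c₁ ≤ c₂, with associated norm ‖v‖' = ⟨v,v⟩^{1/2}. Let e : H → ℝ and û ∈ H satisfy: e'(û) = 0, and there are δ₀ > 0 and 0 < α₀ ≤ M such that e is twice continuously Fréchet differentiable on B(û, δ₀) with α₀‖v‖² ≤ e''(u)(v,v) and |e''(u)(v,w)| ≤ M‖v‖‖w‖ for all u ∈ B(û, δ₀). For u ∈ H define the gradient g = g(u) with respect to ⟨·,·⟩ by ⟨g, v⟩ = e'(u)(v) for all v ∈ H. Then there exists κ₀ > 0 such that for every κ ∈ (0, κ₀) there is ε ∈ (0,1) with the property: for every u ∈ B(û, δ₀), the update ũ := u − κ g(u) satisfies ‖ũ − û‖' ≤ ε‖u − û‖'. -/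
/-- Linear convergence of the gradient method when the gradient is computed with
respect to an equivalent inner product `p` on the Hilbert space `H`: for all small
enough step sizes `κ` there is a contraction factor `ε ∈ (0,1)` in the `p`-norm. -/
theorem gradient_method_equivalent_inner_product
    {H : Type*} [NormedAddCommGroup H] [InnerProductSpace ℝ H] [CompleteSpace H]
    (p : H →L[ℝ] H →L[ℝ] ℝ) (c₁ c₂ : ℝ) (hc₁ : 0 < c₁) (hc₁₂ : c₁ ≤ c₂)
    (hpsymm : ∀ v w : H, p v w = p w v)
    (hplow : ∀ v : H, c₁ * ‖v‖ ^ 2 ≤ p v v)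
    (hphigh : ∀ v : H, p v v ≤ c₂ * ‖v‖ ^ 2)
    (e : H → ℝ) (uh : H) (δ₀ α₀ M : ℝ)
    (hδ₀ : 0 < δ₀) (hα₀ : 0 < α₀) (hα₀M : α₀ ≤ M)
    (hcrit : fderiv ℝ e uh = 0)
    (hC2 : ContDiffOn ℝ 2 e (Metric.ball uh δ₀))
    (e'' : H → H →L[ℝ] H →L[ℝ] ℝ)
    (he'' : ∀ u ∈ Metric.ball uh δ₀, HasFDerivAt (fun x => fderiv ℝ e x) (e'' u) u)
    (hcoer : ∀ u ∈ Metric.ball uh δ₀, ∀ v : H, α₀ * ‖v‖ ^ 2 ≤ e'' u v v)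
    (hbdd : ∀ u ∈ Metric.ball uh δ₀, ∀ v w : H, |e'' u v w| ≤ M * ‖v‖ * ‖w‖) :
    ∃ κ₀ > 0, ∀ κ : ℝ, 0 < κ → κ < κ₀ → ∃ ε : ℝ, 0 < ε ∧ ε < 1 ∧
      ∀ u ∈ Metric.ball uh δ₀, ∀ g : H, (∀ v : H, p g v = fderiv ℝ e u v) →
        Real.sqrt (p ((u - κ • g) - uh) ((u - κ • g) - uh)) ≤
          ε * Real.sqrt (p (u - uh) (u - uh)) := by
  have hM : 0 < M := lt_of_lt_of_le hα₀ hα₀M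
  have hc₂ : 0 < c₂ := lt_of_lt_of_le hc₁ hc₁₂
  refine ⟨2 * α₀ * c₁ / M ^ 2, by positivity, ?_⟩
  intro κ hκ hκ'
  set γ : ℝ := 2 * κ * α₀ - κ ^ 2 * M ^ 2 / c₁ with hγdef
  have hγ : 0 < γ := by
    have h1 : κ * M ^ 2 < 2 * α₀ * c₁ := by
      rw [lt_div_iff₀ (by positivity)] at hκ'
      linarith
    have h2 : κ ^ 2 * M ^ 2 / c₁ < 2 * κ * α₀ := by
      rw [div_lt_iff₀ hc₁]
      nlinarith
    rw [hγdef]; linarith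
  set ε : ℝ := Real.sqrt (max (1 - γ / c₂) (1 / 2)) with hεdef
  have hmaxnn : (0:ℝ) ≤ max (1 - γ / c₂) (1 / 2) := le_max_of_le_right (by norm_num)
  have hε0 : 0 < ε := Real.sqrt_pos.2 (lt_max_of_lt_right (by norm_num))
  have hε1 : ε < 1 := by
    rw [hεdef, Real.sqrt_lt' one_pos]
    apply max_lt _ (by norm_num)
    have : 0 < γ / c₂ := div_pos hγ hc₂
    nlinarith
  have hε2 : 1 - γ / c₂ ≤ ε ^ 2 := by
    rw [hεdef, Real.sq_sqrt hmaxnn]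
    exact le_max_left _ _
  refine ⟨ε, hε0, hε1, ?_⟩
  intro u hu g hg
  set x : H := u - uh with hx
  have hxball : ‖x‖ < δ₀ := by rwa [mem_ball_iff_norm] at hu
  have hmem : ∀ t ∈ Set.Icc (0:ℝ) 1, uh + t • x ∈ Metric.ball uh δ₀ := by
    intro t ht
    rw [Metric.mem_ball, dist_eq_norm]
    have : uh + t • x - uh = t • x := by abel
    rw [this, norm_smul]
    calc ‖t‖ * ‖x‖ ≤ 1 * ‖x‖ := by
          apply mul_le_mul_of_nonneg_right _ (norm_nonneg x)
          rw [Real.norm_eq_abs, abs_le]; constructor <;> linarith [ht.1, ht.2]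
      _ < δ₀ := by rwa [one_mul]
  have hDeriv : ∀ v : H, ∀ t ∈ Set.Icc (0:ℝ) 1,
      HasDerivAt (fun s : ℝ => fderiv ℝ e (uh + s • x) v) (e'' (uh + t • x) x v) t := by
    intro v t ht
    have hpath : HasDerivAt (fun s : ℝ => uh + s • x) x t := by
      simpa using ((hasDerivAt_id t).smul_const x).const_add uh
    have h1 := (he'' _ (hmem t ht)).comp_hasDerivAt t hpath
    have h2 := h1.clm_apply (hasDerivAt_const t v)
    simpa using h2
  have hval1 : uh + x = u := by rw [hx]; abel
  -- bound (B): |e'(u) v| ≤ M ‖x‖ ‖v‖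
  have hB : ∀ v : H, |fderiv ℝ e u v| ≤ M * ‖x‖ * ‖v‖ := by
    intro v
    have := Convex.norm_image_sub_le_of_norm_hasDerivWithin_le
      (f := fun s : ℝ => fderiv ℝ e (uh + s • x) v)
      (f' := fun t => e'' (uh + t • x) x v) (C := M * ‖x‖ * ‖v‖) (s := Set.Icc 0 1)
      (fun t ht => (hDeriv v t ht).hasDerivWithinAt)
      (fun t ht => by
        rw [Real.norm_eq_abs]
        exact hbdd _ (hmem t ht) x v)
      (convex_Icc 0 1) (Set.left_mem_Icc.2 zero_le_one) (Set.right_mem_Icc.2 zero_le_one)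
    simpa [one_smul, zero_smul, add_zero, hval1, hcrit, Real.norm_eq_abs] using this
  -- bound (A): α₀ ‖x‖² ≤ e'(u) x
  have hA : α₀ * ‖x‖ ^ 2 ≤ fderiv ℝ e u x := by
    set F : ℝ → ℝ := fun t => fderiv ℝ e (uh + t • x) x - α₀ * ‖x‖ ^ 2 * t with hF
    have hFd : ∀ t ∈ Set.Icc (0:ℝ) 1,
        HasDerivAt F (e'' (uh + t • x) x x - α₀ * ‖x‖ ^ 2) t := by
      intro t ht
      have h2 : HasDerivAt (fun s : ℝ => α₀ * ‖x‖ ^ 2 * s) (α₀ * ‖x‖ ^ 2) t := by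
        simpa using (hasDerivAt_id t).const_mul (α₀ * ‖x‖ ^ 2)
      exact (hDeriv x t ht).sub h2
    have hmono : MonotoneOn F (Set.Icc 0 1) := by
      apply monotoneOn_of_deriv_nonneg (convex_Icc 0 1)
      · intro t ht
        exact (hFd t ht).continuousAt.continuousWithinAt
      · intro t ht
        rw [interior_Icc] at ht
        exact ((hFd t (Set.mem_Icc_of_Ioo ht)).differentiableAt).differentiableWithinAt
      · intro t ht
        rw [interior_Icc] at ht
        rw [(hFd t (Set.mem_Icc_of_Ioo ht)).deriv]
        have := hcoer _ (hmem t (Set.mem_Icc_of_Ioo ht)) x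
        linarith
    have := hmono (Set.left_mem_Icc.2 zero_le_one) (Set.right_mem_Icc.2 zero_le_one) zero_le_one
    simp only [hF, one_smul, zero_smul, add_zero, hval1, hcrit,
      ContinuousLinearMap.zero_apply, mul_zero, mul_one, sub_zero] at this
    linarith
  -- gradient bound
  have hpgg : p g g ≤ M ^ 2 / c₁ * ‖x‖ ^ 2 := by
    have h1 : c₁ * ‖g‖ ^ 2 ≤ p g g := hplow g
    have h3 : p g g ≤ M * ‖x‖ * ‖g‖ := by
      rw [hg g]
      exact le_trans (le_abs_self _) (hB g)
    have hgle : c₁ * ‖g‖ ≤ M * ‖x‖ := by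
      rcases eq_or_lt_of_le (norm_nonneg g) with h | h
      · rw [← h, mul_zero]; positivity
      · have h4 : (c₁ * ‖g‖) * ‖g‖ ≤ (M * ‖x‖) * ‖g‖ := by
          calc (c₁ * ‖g‖) * ‖g‖ = c₁ * ‖g‖ ^ 2 := by ring
            _ ≤ p g g := h1
            _ ≤ M * ‖x‖ * ‖g‖ := h3
        exact le_of_mul_le_mul_right h4 h
    have e1 : M * ‖x‖ * (c₁ * ‖g‖) ≤ M * ‖x‖ * (M * ‖x‖) :=
      mul_le_mul_of_nonneg_left hgle (by positivity)
    have e2 : c₁ * (p g g) ≤ c₁ * (M * ‖x‖ * ‖g‖) :=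
      mul_le_mul_of_nonneg_left h3 hc₁.le
    rw [div_mul_eq_mul_div, le_div_iff₀ hc₁]
    linarith [e1, e2]
  -- expansion of the p-norm of the update
  have hy : (u - κ • g) - uh = x - κ • g := by rw [hx]; abel
  have hpexp : p ((u - κ • g) - uh) ((u - κ • g) - uh)
      = p x x - 2 * κ * (fderiv ℝ e u x) + κ ^ 2 * (p g g) := by
    rw [hy]
    simp only [map_sub, map_smul, ContinuousLinearMap.sub_apply,
      ContinuousLinearMap.smul_apply, smul_eq_mul, hpsymm x g, hg x]
    ring
  have hpxx0 : (0:ℝ) ≤ p x x := le_trans (by positivity) (hplow x)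
  have key : p ((u - κ • g) - uh) ((u - κ • g) - uh) ≤ ε ^ 2 * p x x := by
    rw [hpexp]
    have h5 : γ / c₂ * p x x ≤ γ * ‖x‖ ^ 2 := by
      have := mul_le_mul_of_nonneg_left (hphigh x) (le_of_lt (div_pos hγ hc₂))
      calc γ / c₂ * p x x ≤ γ / c₂ * (c₂ * ‖x‖ ^ 2) := this
        _ = γ * ‖x‖ ^ 2 := by field_simp
    have hA' : 2 * κ * (α₀ * ‖x‖ ^ 2) ≤ 2 * κ * (fderiv ℝ e u x) :=
      mul_le_mul_of_nonneg_left hA (by positivity : (0:ℝ) ≤ 2 * κ)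
    have hG' : κ ^ 2 * (p g g) ≤ κ ^ 2 * (M ^ 2 / c₁ * ‖x‖ ^ 2) :=
      mul_le_mul_of_nonneg_left hpgg (by positivity : (0:ℝ) ≤ κ ^ 2)
    have heq : p x x - 2 * κ * (α₀ * ‖x‖ ^ 2) + κ ^ 2 * (M ^ 2 / c₁ * ‖x‖ ^ 2)
        = p x x - γ * ‖x‖ ^ 2 := by rw [hγdef]; ring
    have heq2 : p x x - γ / c₂ * p x x = (1 - γ / c₂) * p x x := by ring
    have h7 : (1 - γ / c₂) * p x x ≤ ε ^ 2 * p x x :=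
      mul_le_mul_of_nonneg_right hε2 hpxx0
    linarith
  have hpy0 : (0:ℝ) ≤ p ((u - κ • g) - uh) ((u - κ • g) - uh) :=
    le_trans (by positivity) (hplow _)
  calc Real.sqrt (p ((u - κ • g) - uh) ((u - κ • g) - uh))
      ≤ Real.sqrt (ε ^ 2 * p x x) := Real.sqrt_le_sqrt key
    _ = ε * Real.sqrt (p x x) := by
        rw [Real.sqrt_mul (sq_nonneg ε), Real.sqrt_sq hε0.le]
end

section
/- Let H be a real Hilbert space, û ∈ H, δ > 0, and e : H → ℝ three times continuously Fréchet differentiable on B(û, δ) with e'(û) = 0, satisfying for all u ∈ B(û, δ) and v, w ∈ H: e''(u)(v,v) ≥ m‖v‖², |e''(u)(v,w)| ≤ M‖v‖‖w‖, and ‖e'''(u)‖ ≤ K, where 0 < m ≤ M and K ≥ 0. Then there exists C > 0 (one may take C = √(M/m)·K/(2m)) such that for every u ∈ B(û, δ), every κ > 0, every closed subspace T ⊆ H, and every g ∈ H satisfying e''(u)(κ g, t) = e'(u)(t) for all t ∈ T, the update ũ := u − κ g satisfies ‖P(ũ − û)‖ ≤ C‖u − û‖², where P is the e''(u)-orthogonal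 projection of H onto T. -/
set_option maxSynthPendingDepth 2
set_option maxHeartbeats 1000000

/-- Quadratic projected-error estimate for the optimized-inner-product gradient method:
if `κ g` matches the Newton step weakly on a closed subspace `T`
(i.e. `e''(u)(κ g, t) = e'(u)(t)` for all `t ∈ T`), then the `e''(u)`-orthogonal
projection onto `T` of the error of the update `u - κ g` is quadratically small. -/
theorem projected_quadratic_error_estimate
    {H : Type*} [NormedAddCommGroup H] [InnerProductSpace ℝ H] [CompleteSpace H]
    (e : H → ℝ) (uh : H) (δ m M K : ℝ)
    (hδ : 0 < δ) (hm : 0 < m) (hmM : m ≤ M) (hK : 0 ≤ K)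
    (hC3 : ContDiffOn ℝ 3 e (Metric.ball uh δ))
    (hcrit : fderiv ℝ e uh = 0)
    (e'' : H → H →L[ℝ] H →L[ℝ] ℝ)
    (e''' : H → H →L[ℝ] H →L[ℝ] H →L[ℝ] ℝ)
    (he'' : ∀ u ∈ Metric.ball uh δ, HasFDerivAt (fun x => fderiv ℝ e x) (e'' u) u)
    (he''' : ∀ u ∈ Metric.ball uh δ, HasFDerivAt e'' (e''' u) u)
    (hsymm : ∀ u ∈ Metric.ball uh δ, ∀ v w : H, e'' u v w = e'' u w v)
    (hcoer : ∀ u ∈ Metric.ball uh δ, ∀ v : H, m * ‖v‖ ^ 2 ≤ e'' u v v)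
    (hbdd : ∀ u ∈ Metric.ball uh δ, ∀ v w : H, |e'' u v w| ≤ M * ‖v‖ * ‖w‖)
    (hK3 : ∀ u ∈ Metric.ball uh δ, ‖e''' u‖ ≤ K) :
    ∀ u ∈ Metric.ball uh δ, ∀ κ : ℝ, 0 < κ →
      ∀ T : Submodule ℝ H, IsClosed (T : Set H) →
      ∀ g : H, (∀ t ∈ T, e'' u (κ • g) t = fderiv ℝ e u t) →
      ∀ P : H → H, (∀ w : H, P w ∈ T ∧ ∀ t ∈ T, e'' u (w - P w) t = 0) →
        ‖P ((u - κ • g) - uh)‖ ≤ (Real.sqrt (M / m) * K / (2 * m)) * ‖u - uh‖ ^ 2 := by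
  intro u hu κ hκ T hT gv hgv P hP
  have huh : uh ∈ Metric.ball uh δ := Metric.mem_ball_self hδ
  set d : H := uh - u with hd
  have hseg : ∀ s ∈ Set.Icc (0:ℝ) 1, u + s • d ∈ Metric.ball uh δ := fun s hs =>
    (convex_ball uh δ).add_smul_sub_mem hu huh hs
  set Q : ℝ := K * ‖d‖ ^ 2 with hQdef
  have hQ : 0 ≤ Q := by positivity
  -- the Taylor auxiliary function
  set G : ℝ → (H →L[ℝ] ℝ) :=
    fun s => fderiv ℝ e (u + s • d) + (1 - s) • ((e'' (u + s • d)) d) with hGdef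
  have hGderiv : ∀ s ∈ Set.Icc (0:ℝ) 1,
      HasDerivAt G ((1 - s) • (((e''' (u + s • d)) d) d)) s := by
    intro s hs
    have hxs := hseg s hs
    have hx : HasDerivAt (fun s : ℝ => u + s • d) d s := by
      simpa using ((hasDerivAt_id s).smul_const d).const_add u
    have h1 : HasDerivAt (fun s : ℝ => fderiv ℝ e (u + s • d)) ((e'' (u + s • d)) d) s :=
      (he'' _ hxs).comp_hasDerivAt s hx
    have h2 : HasDerivAt (fun s : ℝ => e'' (u + s • d)) ((e''' (u + s • d)) d) s :=
      (he''' _ hxs).comp_hasDerivAt s hx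
    have h3 : HasDerivAt (fun s : ℝ => (e'' (u + s • d)) d) (((e''' (u + s • d)) d) d) s := by
      simpa using h2.clm_apply (hasDerivAt_const s d)
    have hc : HasDerivAt (fun s : ℝ => (1 : ℝ) - s) (-1) s := by
      simpa using (hasDerivAt_id s).const_sub (1 : ℝ)
    have h4 := hc.smul h3
    have h5 := h1.add h4
    refine h5.congr_deriv ?_
    module
  have hGcont : ContinuousOn G (Set.Icc (0:ℝ) 1) := fun s hs =>
    (hGderiv s hs).continuousAt.continuousWithinAt
  -- mean value estimate
  have key : ‖G 1 - G 0‖ ≤ Q / 2 := by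
    have hB : ∀ x : ℝ, HasDerivAt (fun s : ℝ => Q * (s - s ^ 2 / 2)) (Q * (1 - x)) x := by
      intro x
      have h := (((hasDerivAt_id x).sub ((hasDerivAt_pow 2 x).div_const 2)).const_mul Q)
      refine h.congr_deriv ?_
      ring
    have hmv := image_norm_le_of_norm_deriv_right_le_deriv_boundary
      (f := fun s => G s - G 0) (a := 0) (b := 1)
      (f' := fun s => (1 - s) • (((e''' (u + s • d)) d) d))
      (hGcont.sub continuousOn_const)
      (fun x hx => ((hGderiv x (Set.Ico_subset_Icc_self hx)).sub_const (G 0)).hasDerivWithinAt)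
      (B := fun s => Q * (s - s ^ 2 / 2)) (B' := fun s => Q * (1 - s))
      (by simp) hB
      (fun x hx => by
        have h1x : (0:ℝ) ≤ 1 - x := by linarith [hx.2]
        show ‖(1 - x) • (((e''' (u + x • d)) d) d)‖ ≤ Q * (1 - x)
        rw [norm_smul, Real.norm_eq_abs, abs_of_nonneg h1x, mul_comm Q (1 - x)]
        have hb : ‖((e''' (u + x • d)) d) d‖ ≤ Q := by
          calc ‖((e''' (u + x • d)) d) d‖ ≤ ‖(e''' (u + x • d)) d‖ * ‖d‖ :=
                ContinuousLinearMap.le_opNorm _ _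
            _ ≤ ‖e''' (u + x • d)‖ * ‖d‖ * ‖d‖ := by
                gcongr; exact ContinuousLinearMap.le_opNorm _ _
            _ ≤ K * ‖d‖ * ‖d‖ := by
                gcongr; exact hK3 _ (hseg x (Set.Ico_subset_Icc_self hx))
            _ = Q := by rw [hQdef]; ring
        exact mul_le_mul_of_nonneg_left hb h1x)
    have h1 := hmv (Set.right_mem_Icc.mpr zero_le_one)
    norm_num at h1
    linarith
  have hG1 : G 1 = 0 := by
    simp [hGdef, hd, hcrit]
  have hG0 : G 0 = fderiv ℝ e u + (e'' u) d := by
    simp [hGdef]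
  have hTaylor : ‖fderiv ℝ e u + (e'' u) d‖ ≤ Q / 2 := by
    rw [← hG0]
    calc ‖G 0‖ = ‖G 1 - G 0‖ := by rw [hG1]; simp
      _ ≤ Q / 2 := key
  -- the projected error
  set w : H := (u - κ • gv) - uh with hwdef
  set p : H := P w with hpdef
  obtain ⟨hpT, hporth⟩ := hP w
  -- e''(u) p p = e''(u) w p
  have horth : e'' u p p = e'' u w p := by
    have h := hporth p hpT
    have : e'' u (w - p) p = e'' u w p - e'' u p p := by
      rw [map_sub]; simp
    rw [this] at h
    linarith
  -- e''(u) w p = -((e' u + e'' u d) p)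
  have hwp : e'' u w p = -((fderiv ℝ e u + (e'' u) d) p) := by
    have hw : w = (-d) - κ • gv := by
      rw [hwdef, hd]; abel
    have h1 : e'' u w p = e'' u (-d) p - e'' u (κ • gv) p := by
      rw [hw, map_sub]; simp
    rw [h1, hgv p hpT]
    simp [hsymm u hu d p]
    ring
  have hbound2 : e'' u p p ≤ Q / 2 * ‖p‖ := by
    rw [horth, hwp]
    calc -((fderiv ℝ e u + (e'' u) d) p) ≤ |((fderiv ℝ e u + (e'' u) d) p)| := neg_le_abs _
      _ ≤ ‖fderiv ℝ e u + (e'' u) d‖ * ‖p‖ := by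
          rw [← Real.norm_eq_abs]; exact ContinuousLinearMap.le_opNorm _ _
      _ ≤ Q / 2 * ‖p‖ := by gcongr
  have hcoerp := hcoer u hu p
  have hmain : m * ‖p‖ ^ 2 ≤ Q / 2 * ‖p‖ := le_trans hcoerp hbound2
  have hnd : ‖d‖ = ‖u - uh‖ := by rw [hd, norm_sub_rev]
  have hs1 : (1:ℝ) ≤ Real.sqrt (M / m) := by
    rw [show (1:ℝ) = Real.sqrt 1 by simp]
    exact Real.sqrt_le_sqrt ((one_le_div hm).mpr hmM)
  rcases eq_or_lt_of_le (norm_nonneg p) with h0 | h0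
  · rw [← h0]
    exact mul_nonneg (div_nonneg (mul_nonneg (Real.sqrt_nonneg _) hK) (by linarith)) (sq_nonneg _)
  · have hple : ‖p‖ ≤ K / (2 * m) * ‖u - uh‖ ^ 2 := by
      rw [hQdef, hnd] at hmain
      rw [div_mul_eq_mul_div, le_div_iff₀ (by linarith : (0:ℝ) < 2 * m)]
      nlinarith [h0]
    calc ‖p‖ ≤ K / (2 * m) * ‖u - uh‖ ^ 2 := hple
      _ ≤ Real.sqrt (M / m) * K / (2 * m) * ‖u - uh‖ ^ 2 := by
          have hKle : K ≤ Real.sqrt (M / m) * K := by nlinarith [hs1, hK]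
          have h2m : (0:ℝ) < 2 * m := by linarith
          exact mul_le_mul_of_nonneg_right ((div_le_div_iff_of_pos_right h2m).mpr hKle) (sq_nonneg _)
end

section
/- Let H be a real Hilbert space and q a continuous symmetric bilinear form on H with m‖v‖² ≤ q(v,v) and |q(v,w)| ≤ M‖v‖‖w‖ for all v,w ∈ H, where 0 < m ≤ M. Let T ⊆ H be a closed subspace, P the q-orthogonal projection onto T, and L ∈ H' a continuous linear functional. Suppose h ∈ H satisfies q(h, v) = L(v) for all v ∈ H, and suppose κ > 0 and g ∈ H satisfy q(κ g, t) = L(t) for all t ∈ T. Then P(h) = P(κ g). -/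
/-- If `h` solves `q(h,·) = L` on all of `H` and `κ g` solves the same equation tested
only against a closed subspace `T`, then the `q`-orthogonal projections onto `T` of
`h` and of `κ g` coincide. -/
theorem projection_of_newton_step_eq_projection_of_scaled_gradient
    {H : Type*} [NormedAddCommGroup H] [InnerProductSpace ℝ H] [CompleteSpace H]
    (q : H →L[ℝ] H →L[ℝ] ℝ) (m M : ℝ) (hm : 0 < m) (hmM : m ≤ M)
    (hsymm : ∀ v w : H, q v w = q w v)
    (hcoer : ∀ v : H, m * ‖v‖ ^ 2 ≤ q v v)
    (hbdd : ∀ v w : H, |q v w| ≤ M * ‖v‖ * ‖w‖)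
    (T : Submodule ℝ H) (hT : IsClosed (T : Set H))
    (P : H → H) (hP : ∀ w : H, P w ∈ T ∧ ∀ t ∈ T, q (w - P w) t = 0)
    (L : H →L[ℝ] ℝ) (h : H) (hh : ∀ v : H, q h v = L v)
    (κ : ℝ) (hκ : 0 < κ) (g : H) (hg : ∀ t ∈ T, q (κ • g) t = L t) :
    P h = P (κ • g) := by
  obtain ⟨hPh, hPh'⟩ := hP h
  obtain ⟨hPg, hPg'⟩ := hP (κ • g)
  set d := P h - P (κ • g) with hd
  have hdT : d ∈ T := T.sub_mem hPh hPg
  have key : ∀ t ∈ T, q d t = 0 := by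
    intro t ht
    have e1 : q (P h) t = L t := by
      have := hPh' t ht
      have := hh t
      simp only [map_sub, ContinuousLinearMap.sub_apply] at *
      linarith
    have e2 : q (P (κ • g)) t = L t := by
      have := hPg' t ht
      have := hg t ht
      simp only [map_sub, ContinuousLinearMap.sub_apply] at *
      linarith
    simp only [hd, map_sub, ContinuousLinearMap.sub_apply, e1, e2, sub_self]
  have hqd : q d d = 0 := key d hdT
  have h0 : m * ‖d‖ ^ 2 ≤ 0 := by rw [← hqd]; exact hcoer d
  have hdz : d = 0 := by
    by_contra hne
    have hpos : 0 < ‖d‖ := norm_pos_iff.mpr hne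
    have := mul_pos hm (pow_pos hpos 2)
    linarith
  exact sub_eq_zero.mp hdz
end
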